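/- Let U : F_2^n → F_2^n be an isometry for the Hamming distance, i.e., d(U(x), U(y)) = d(x,y) for all x, y. Then there exists a unique permutation σ of {1,…,n} such that for every x ∈ F_2^n and every I ⊆ {1,…,n}, U(x + e^I) = U(x) + e^{σ(I)}, where σ(I) = {σ(i) : i ∈ I}. -/

import Mathlib

/-- States of a Boolean network on `n` components: `F_2^n`. -/
abbrev St (n : ℕ) := Fin n → ZMod 2

/-- The unit vector `e^i`. -/
def uv {n : ℕ} (i : Fin n) : St n := fun j => if j = i then 1 else 0

/-- There is an edge from `j` to `i` in the local interaction graph `G(f)(x)`,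
i.e. `∂_j f_i (x) = 1`. -/
def hasEdge {n : ℕ} (f : St n → St n) (x : St n) (j i : Fin n) : Prop :=
  f (x + uv j) i ≠ f x i

/-- `(j,i)` is a positive edge of `G(f)(x)`. -/
def edgePos {n : ℕ} (f : St n → St n) (x : St n) (j i : Fin n) : Prop :=
  hasEdge f x j i ∧ x j = f x i

/-- `(j,i)` is a negative edge of `G(f)(x)`. -/
def edgeNeg {n : ℕ} (f : St n → St n) (x : St n) (j i : Fin n) : Prop :=
  hasEdge f x j i ∧ x j ≠ f x i

/-- The local interaction graph `G(f)(x)` has a negative (elementary, directed) cycle: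
a cyclic sequence of pairwise distinct vertices, each consecutive pair being an edge of
`G(f)(x)`, with an odd number of negative edges. -/
def hasNegCycleAt {n : ℕ} (f : St n → St n) (x : St n) : Prop :=
  ∃ (m : ℕ) (v : Fin (m + 1) → Fin n), Function.Injective v ∧
    (∀ k, hasEdge f x (v k) (v (k + 1))) ∧
    Odd (Nat.card {k : Fin (m + 1) // edgeNeg f x (v k) (v (k + 1))})

/-- `f` is an and-net: each coordinate function is a product of literals. -/
def IsAndNet {n : ℕ} (f : St n → St n) : Prop :=
  ∀ i : Fin n, ∃ P N : Finset (Fin n), Disjoint P N ∧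
    ∀ x : St n, f x i = (∏ j ∈ P, x j) * ∏ j ∈ N, (x j + 1)

/-- The characteristic vector `e^I` of a set `I` of coordinates. -/
def eS {n : ℕ} (I : Finset (Fin n)) : St n := fun t => if t ∈ I then 1 else 0

lemma zmod2_cases (a : ZMod 2) : a = 0 ∨ a = 1 := by revert a; decide
lemma zmod2_ne_iff {a b : ZMod 2} : a ≠ b ↔ b = a + 1 := by revert a b; decide

lemma uv_inj {n : ℕ} : Function.Injective (uv (n := n)) := by
  intro a b h
  by_contra hab
  have := congrFun h b
  simp [uv, hab] at this
  exact hab this.symm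

lemma uv_add_self {n : ℕ} (i : Fin n) : uv i + uv i = 0 := by
  funext t
  have : ∀ a : ZMod 2, a + a = 0 := by decide
  exact this _

lemma dist_one_uv {n : ℕ} {u v : St n} (h : hammingDist u v = 1) :
    ∃ j : Fin n, v = u + uv j := by
  rw [hammingDist] at h
  obtain ⟨j, hj⟩ := Finset.card_eq_one.mp h
  refine ⟨j, funext fun t => ?_⟩
  by_cases ht : t = j
  · subst ht
    have hmem : t ∈ ({i | u i ≠ v i} : Finset (Fin n)) := by rw [hj]; simp
    have hne : u t ≠ v t := by simpa using hmem
    have := zmod2_ne_iff.mp hne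
    simp [uv, this]
  · have hmem : t ∉ ({i | u i ≠ v i} : Finset (Fin n)) := by rw [hj]; simp [ht]
    have heq : u t = v t := by simpa using hmem
    simp [uv, ht, ← heq]

lemma dist_self_add_uv {n : ℕ} (x : St n) (i : Fin n) : hammingDist x (x + uv i) = 1 := by
  rw [hammingDist]
  have : ({t | x t ≠ (x + uv i) t} : Finset (Fin n)) = {i} := by
    ext t
    by_cases ht : t = i <;> simp [ht, uv, zmod2_ne_iff]
  rw [this, Finset.card_singleton]

lemma eS_empty {n : ℕ} : eS (∅ : Finset (Fin n)) = 0 := by funext t; simp [eS]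

lemma eS_singleton {n : ℕ} (j : Fin n) : eS {j} = uv j := by
  funext t; simp [eS, uv]

lemma eS_insert {n : ℕ} {j : Fin n} {J : Finset (Fin n)} (h : j ∉ J) :
    eS (insert j J) = uv j + eS J := by
  funext t
  by_cases ht : t = j
  · subst ht; simp [eS, uv, h]
  · simp [eS, uv, ht]

lemma eq_eS {n : ℕ} (x : St n) : x = eS ({j | x j = 1} : Finset (Fin n)) := by
  funext t
  rcases zmod2_cases (x t) with h | h <;> simp [eS, h]

theorem stmt_14 (n : ℕ) (U : St n → St n)
    (hU : ∀ x y : St n, hammingDist (U x) (U y) = hammingDist x y) :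
    ∃! σ : Equiv.Perm (Fin n),
      ∀ (x : St n) (I : Finset (Fin n)), U (x + eS I) = U x + eS (I.image σ) := by
  have hUinj : Function.Injective U := by
    intro x y h
    have h0 := hU x y
    rw [h, hammingDist_self] at h0
    exact eq_of_hammingDist_eq_zero h0.symm
  have hex : ∀ (x : St n) (i : Fin n), ∃ j, U (x + uv i) = U x + uv j := by
    intro x i
    apply dist_one_uv
    rw [hU]
    exact dist_self_add_uv x i
  choose τ hτ using hex
  have hτinj : ∀ x, Function.Injective (τ x) := by
    intro x a b h
    have h1 : U (x + uv a) = U (x + uv b) := by rw [hτ, hτ, h]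
    have h2 : x + uv a = x + uv b := hUinj h1
    exact uv_inj (add_left_cancel h2)
  have hstep : ∀ (x : St n) (i k : Fin n), τ (x + uv k) i = τ x i := by
    intro x i k
    by_cases hik : k = i
    · subst hik
      have h1 : (x + uv k) + uv k = x := by rw [add_assoc, uv_add_self, add_zero]
      have h2 := hτ (x + uv k) k
      rw [h1, hτ x k] at h2
      -- h2 : U x = (U x + uv (τ x k)) + uv (τ (x + uv k) k)
      have h3 : U x + uv (τ x k) + uv (τ x k) = U x + uv (τ x k) + uv (τ (x + uv k) k) := by
        rw [← h2, add_assoc, uv_add_self, add_zero]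
      exact (uv_inj (add_left_cancel h3)).symm
    · set a := τ x i with ha
      set b := τ (x + uv i) k with hb
      set c := τ x k with hc
      set d := τ (x + uv k) i with hd
      have e1 : U (x + uv i + uv k) = U x + uv a + uv b := by rw [hτ (x + uv i) k, hτ x i]
      have e2 : U (x + uv k + uv i) = U x + uv c + uv d := by rw [hτ (x + uv k) i, hτ x k]
      have hsame : x + uv i + uv k = x + uv k + uv i := by abel
      have key : uv a + uv b = uv c + uv d := by
      -- U x + uv a + uv b = U x + uv c + uv d
        have h4 : U x + uv a + uv b = U x + uv c + uv d := by
          rw [← e1, ← e2, hsame]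
        have h5 : U x + (uv a + uv b) = U x + (uv c + uv d) := by
          rw [← add_assoc, ← add_assoc]; exact h4
        exact add_left_cancel h5
      have hxne : x + uv i + uv k ≠ x := by
        intro h
        have h9 := congrFun h i
        have hik' : ¬ i = k := fun hh => hik hh.symm
        simp [uv, hik'] at h9
      have hab : a ≠ b := by
        intro h
        apply hxne
        apply hUinj
        rw [e1, h, add_assoc, uv_add_self, add_zero]
      have hcd : c ≠ d := by
        intro h
        rw [h, uv_add_self] at key
        have := congrFun key a
        simp [uv, hab] at this
      by_cases hda : d = a
      · exact hda
      · exfalso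
        have hval := congrFun key d
        have hdb : d = b := by
          by_contra hdb
          simp [uv, hda, hdb, Ne.symm hcd] at hval
        have h6 : uv a + uv b = uv c + uv b := by rw [key, hdb]
        have h7 : a = c := uv_inj (add_right_cancel h6)
        exact hik (hτinj x (hc ▸ ha ▸ h7).symm)
  have hconst : ∀ (I : Finset (Fin n)) (x : St n) (i : Fin n), τ (x + eS I) i = τ x i := by
    intro I
    induction I using Finset.induction_on with
    | empty => intro x i; rw [eS_empty, add_zero]
    | @insert j J hj ih =>
      intro x i
      have h1 : x + eS (insert j J) = (x + eS J) + uv j := by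
        rw [eS_insert hj]; abel
      rw [h1, hstep, ih]
  have hτ0 : ∀ (x : St n) (i : Fin n), τ x i = τ 0 i := by
    intro x i
    have hx : x = 0 + eS ({j | x j = 1} : Finset (Fin n)) := by
      rw [zero_add]; exact eq_eS x
    rw [hx, hconst]
  let σ : Equiv.Perm (Fin n) :=
    Equiv.ofBijective (fun i => τ 0 i) (Finite.injective_iff_bijective.mp (hτinj 0))
  have hσ : ∀ j, σ j = τ 0 j := fun _ => rfl
  have hmain : ∀ (x : St n) (I : Finset (Fin n)), U (x + eS I) = U x + eS (I.image σ) := by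
    intro x I
    induction I using Finset.induction_on with
    | empty => simp [eS_empty]
    | @insert j J hj ih =>
      have himg : (insert j J).image σ = insert (σ j) (J.image σ) := Finset.image_insert σ j J
      have hj' : σ j ∉ J.image σ := by
        simp only [Finset.mem_image, not_exists, not_and]
        intro t ht h
        exact hj (σ.injective h ▸ ht)
      have h1 : x + eS (insert j J) = (x + eS J) + uv j := by
        rw [eS_insert hj]; abel
      rw [h1, hτ (x + eS J) j, ih, himg, eS_insert hj', hτ0, ← hσ]
      abel
  refine ⟨σ, hmain, ?_⟩
  intro σ' h'
  ext i
  have h1 := h' 0 ({i} : Finset (Fin n))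
  have h2 := hmain 0 ({i} : Finset (Fin n))
  rw [h2] at h1
  have h3 : eS (({i} : Finset (Fin n)).image σ) = eS (({i} : Finset (Fin n)).image σ') := add_left_cancel h1
  rw [Finset.image_singleton, Finset.image_singleton, eS_singleton, eS_singleton] at h3
  exact congrArg Fin.val (uv_inj h3).symm
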